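/- Let γ : ℝ → EuclideanSpace ℝ (Fin 3) be continuous on [0,1] with γ(0) = γ(1) and ‖γ(t)‖ = 1 for all t ∈ [0,1]. If the length of γ, i.e., the total variation eVariationOn γ (Set.Icc 0 1), is strictly less than 2π, then γ lies in an open hemisphere: there exists v with ‖v‖ = 1 such that 0 < ⟪γ(t), v⟫ for all t ∈ [0,1]. -/

import Mathlib

open RealInnerProductSpace Real Set


lemma arccos_antitone : Antitone Real.arccos := fun x y h => by
  unfold Real.arccos; linarith [Real.monotone_arcsin h]

-- angle triangle inequality for unit vectors
lemma arccos_inner_triangle {E : Type*} [NormedAddCommGroup E] [InnerProductSpace ℝ E]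
    {a b c : E} (ha : ‖a‖ = 1) (hb : ‖b‖ = 1) (hc : ‖c‖ = 1) :
    Real.arccos ⟪a, c⟫ ≤ Real.arccos ⟪a, b⟫ + Real.arccos ⟪b, c⟫ := by
  set p := ⟪a, b⟫ with hp
  set q := ⟪b, c⟫ with hq
  set r := ⟪a, c⟫ with hr
  have hp1 : |p| ≤ 1 := by simpa [ha, hb] using abs_real_inner_le_norm a b
  have hq1 : |q| ≤ 1 := by simpa [hb, hc] using abs_real_inner_le_norm b c
  have hr1 : |r| ≤ 1 := by simpa [ha, hc] using abs_real_inner_le_norm a c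
  rw [abs_le] at hp1 hq1 hr1
  have key : p * q - Real.sqrt (1 - p ^ 2) * Real.sqrt (1 - q ^ 2) ≤ r := by
    have h1 : ⟪a - p • b, c - q • b⟫ = r - p * q := by
      simp [inner_sub_left, inner_sub_right, real_inner_smul_left, real_inner_smul_right,
        real_inner_self_eq_norm_sq, hb, ← hp, ← hq, ← hr]
    have h2 : ‖a - p • b‖ ^ 2 = 1 - p ^ 2 := by
      rw [norm_sub_sq_real]; simp [ha, hb, real_inner_smul_right, norm_smul,
        real_inner_self_eq_norm_sq, ← hp]; ring
    have h3 : ‖c - q • b‖ ^ 2 = 1 - q ^ 2 := by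
      rw [norm_sub_sq_real]; simp [hc, hb, real_inner_smul_right, norm_smul,
        real_inner_self_eq_norm_sq, ← hq]
      linear_combination (-2*q) * ((real_inner_comm c b).symm.trans hq.symm)
    have h4 : ‖a - p • b‖ = Real.sqrt (1 - p ^ 2) := by
      rw [← h2]; exact (Real.sqrt_sq (norm_nonneg _)).symm
    have h5 : ‖c - q • b‖ = Real.sqrt (1 - q ^ 2) := by
      rw [← h3]; exact (Real.sqrt_sq (norm_nonneg _)).symm
    have := abs_real_inner_le_norm (a - p • b) (c - q • b)
    rw [h1, h4, h5, abs_le] at this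
    linarith [this.1]
  by_cases hπ : π ≤ Real.arccos p + Real.arccos q
  · exact le_trans (Real.arccos_le_pi r) hπ
  · push_neg at hπ
    have hc2 : Real.cos (Real.arccos p + Real.arccos q) ≤ r := by
      rw [Real.cos_add, Real.cos_arccos hp1.1 hp1.2, Real.cos_arccos hq1.1 hq1.2,
        Real.sin_arccos, Real.sin_arccos]
      exact key
    calc Real.arccos r ≤ Real.arccos (Real.cos (Real.arccos p + Real.arccos q)) :=
        arccos_antitone hc2
      _ = Real.arccos p + Real.arccos q := Real.arccos_cos
          (add_nonneg (Real.arccos_nonneg p) (Real.arccos_nonneg q)) hπ.le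

lemma arcsin_le_two_mul {x : ℝ} (hx0 : 0 ≤ x) (hx : x ≤ 1/2) : Real.arcsin x ≤ 2*x := by
  rcases eq_or_lt_of_le hx0 with h | h
  · simp [← h]
  · have hcube : 0 ≤ x * (1 - 2*x^2) := mul_nonneg hx0 (by nlinarith)
    have h1 : x ≤ Real.sin (2*x) := by
      nlinarith [Real.sin_gt_sub_cube (by linarith : (0:ℝ) < 2*x)]
    calc Real.arcsin x ≤ Real.arcsin (Real.sin (2*x)) := Real.monotone_arcsin h1
      _ = 2*x := Real.arcsin_sin (by linarith [Real.pi_pos]) (by linarith [Real.pi_gt_three])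

lemma arccos_inner_le_chord {E : Type*} [NormedAddCommGroup E] [InnerProductSpace ℝ E]
    {a b : E} (ha : ‖a‖ = 1) (hb : ‖b‖ = 1) {ε : ℝ} (hε1 : ε ≤ 1)
    (hab : ‖a - b‖ ≤ ε) :
    (1 - ε^2/4) * Real.arccos ⟪a, b⟫ ≤ ‖a - b‖ := by
  set c := ‖a - b‖ with hc
  have hc0 : 0 ≤ c := norm_nonneg _
  have hinner : ⟪a, b⟫ = 1 - c^2/2 := by
    have := norm_sub_sq_real a b
    rw [ha, hb, ← hc] at this
    linarith
  set x := c/2 with hx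
  have hx0 : 0 ≤ x := by positivity
  have hx12 : x ≤ 1/2 := by simp only [hx]; linarith
  have harccos : Real.arccos ⟪a, b⟫ = 2 * Real.arcsin x := by
    have hcos : Real.cos (2 * Real.arcsin x) = ⟪a, b⟫ := by
      rw [Real.cos_two_mul, Real.cos_arcsin, Real.sq_sqrt (by nlinarith : (0:ℝ) ≤ 1 - x^2),
        hinner, hx]
      ring
    rw [← hcos, Real.arccos_cos]
    · linarith [Real.arcsin_nonneg.2 hx0]
    · linarith [Real.arcsin_le_pi_div_two x]
  set θ := Real.arcsin x with hθ
  have hθ0 : 0 ≤ θ := Real.arcsin_nonneg.2 hx0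
  have hθ2x : θ ≤ 2*x := arcsin_le_two_mul hx0 hx12
  rcases eq_or_lt_of_le hx0 with h | h
  · have : θ = 0 := by rw [hθ, ← h, Real.arcsin_zero]
    rw [harccos, this]; simpa using hc0
  · have hθpos : 0 < θ := Real.arcsin_pos.2 h
    have hθ1 : θ ≤ 1 := by linarith
    have hsin : θ - θ^3/4 < Real.sin θ := by
      have := Real.sin_gt_sub_cube hθpos; nlinarith [pow_pos hθpos 3]
    have hsθ : Real.sin θ = x := Real.sin_arcsin (by linarith) (by linarith)
    have hsq : θ^2 ≤ (2*x)^2 := by nlinarith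
    have hcub : θ * θ^2 ≤ θ * (2*x)^2 := mul_le_mul_of_nonneg_left hsq hθ0
    have key : θ * (1 - x^2) ≤ x := by nlinarith
    have hxε : x ≤ ε/2 := by simp only [hx]; linarith
    rw [harccos]
    have hc2x : c = 2*x := by rw [hx]; ring
    rw [hc2x]
    have hx2 : x^2 ≤ ε^2/4 := by nlinarith
    have h4 : (1 - ε^2/4) * θ ≤ (1 - x^2) * θ := mul_le_mul_of_nonneg_right (by linarith) hθ0
    nlinarith
lemma arccos_chain {E : Type*} [NormedAddCommGroup E] [InnerProductSpace ℝ E]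
    (f : ℕ → E) (hf : ∀ i, ‖f i‖ = 1) (n : ℕ) :
    Real.arccos ⟪f 0, f n⟫ ≤ ∑ i ∈ Finset.range n, Real.arccos ⟪f i, f (i+1)⟫ := by
  induction n with
  | zero =>
    have : ⟪f 0, f 0⟫ = 1 := by
      rw [real_inner_self_eq_norm_sq, hf 0]; norm_num
    simp [this, hf 0, Real.arccos_one]
  | succ n ih =>
    rw [Finset.sum_range_succ]
    calc Real.arccos ⟪f 0, f (n+1)⟫
        ≤ Real.arccos ⟪f 0, f n⟫ + Real.arccos ⟪f n, f (n+1)⟫ :=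
          arccos_inner_triangle (hf 0) (hf n) (hf (n+1))
      _ ≤ _ := add_le_add_left ih _

lemma arccos_le_variation (γ : ℝ → EuclideanSpace ℝ (Fin 3))
    (hcont : ContinuousOn γ (Set.Icc 0 1))
    (hsphere : ∀ t ∈ Set.Icc (0 : ℝ) 1, ‖γ t‖ = 1)
    {a b : ℝ} (hab : a ≤ b) (hsub : Set.Icc a b ⊆ Set.Icc 0 1)
    {ε : ℝ} (hε0 : 0 < ε) (hε1 : ε ≤ 1)
    (hfin : eVariationOn γ (Set.Icc a b) ≠ ⊤) :
    (1 - ε^2/4) * Real.arccos ⟪γ a, γ b⟫ ≤ (eVariationOn γ (Set.Icc a b)).toReal := by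
  -- uniform continuity
  have hu : UniformContinuousOn γ (Set.Icc 0 1) :=
    isCompact_Icc.uniformContinuousOn_of_continuous hcont
  rw [Metric.uniformContinuousOn_iff] at hu
  obtain ⟨δ, hδ0, hδ⟩ := hu ε hε0
  obtain ⟨n, hn⟩ := exists_nat_gt ((b - a)/δ)
  have hn0 : 0 < (n+1 : ℝ) := by positivity
  set m : ℕ := n + 1 with hm
  have hm0 : 0 < (m : ℝ) := by positivity
  have hstep : (b - a)/m < δ := by
    rw [div_lt_iff₀ hm0]
    have : (b-a)/δ < m := by push_cast [hm]; linarith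
    nlinarith [mul_lt_mul_of_pos_right this hδ0, (div_mul_cancel₀ (b-a) (ne_of_gt hδ0))]
  set u : ℕ → ℝ := fun i => a + (min i m : ℕ) * ((b - a)/m) with hu_def
  have humono : Monotone u := by
    intro i j hij
    have : (min i m : ℕ) ≤ (min j m : ℕ) := min_le_min_right m hij |>.trans (le_refl _)
    simp only [hu_def]
    have hba : 0 ≤ (b - a)/m := div_nonneg (by linarith) hm0.le
    have : ((min i m : ℕ) : ℝ) ≤ ((min j m : ℕ) : ℝ) := by exact_mod_cast this
    nlinarith
  have humem : ∀ i, u i ∈ Set.Icc a b := by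
    intro i
    simp only [hu_def]
    constructor
    · have : 0 ≤ ((min i m : ℕ):ℝ) * ((b - a)/m) :=
        mul_nonneg (Nat.cast_nonneg _) (div_nonneg (by linarith) hm0.le)
      linarith
    · have h1 : ((min i m : ℕ):ℝ) ≤ (m:ℝ) := by exact_mod_cast min_le_right i m
      have h2 : ((min i m : ℕ):ℝ) * ((b - a)/m) ≤ (m:ℝ) * ((b - a)/m) :=
        mul_le_mul_of_nonneg_right h1 (div_nonneg (by linarith) hm0.le)
      have h3 : (m:ℝ) * ((b - a)/m) = b - a := by field_simp
      linarith
  have hchord : ∀ i, ‖γ (u i) - γ (u (i+1))‖ ≤ ε := by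
    intro i
    have h1 : dist (u i) (u (i+1)) ≤ (b-a)/m := by
      rw [Real.dist_eq, abs_sub_comm, abs_of_nonneg (by linarith [humono (Nat.le_succ i)] : 0 ≤ u (i+1) - u i)]
      simp only [hu_def]
      have : ((min (i+1) m : ℕ):ℝ) - ((min i m : ℕ):ℝ) ≤ 1 := by
        have := min_le_min_right m (Nat.le_succ i)
        have h2 : (min (i+1) m : ℕ) ≤ min i m + 1 := by omega
        have := (Nat.cast_le (α := ℝ)).2 h2
        push_cast at this ⊢
        linarith
      have hba : 0 ≤ (b - a)/m := div_nonneg (by linarith) hm0.le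
      nlinarith
    have := hδ (u i) (hsub (humem i)) (u (i+1)) (hsub (humem (i+1))) (lt_of_le_of_lt h1 hstep)
    rw [dist_eq_norm] at this
    exact this.le
  have hunit : ∀ i, ‖γ (u i)‖ = 1 := fun i => hsphere _ (hsub (humem i))
  have hu0 : u 0 = a := by simp [hu_def]
  have hun : u m = b := by
    simp only [hu_def, min_self]
    field_simp
    ring
  have chain := arccos_chain (fun i => γ (u i)) hunit m
  simp only [hu0, hun] at chain
  have hfac : (0:ℝ) ≤ 1 - ε^2/4 := by nlinarith
  have step2 : ∀ i, (1 - ε^2/4) * Real.arccos ⟪γ (u i), γ (u (i+1))⟫ ≤ dist (γ (u (i+1))) (γ (u i)) := by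
    intro i
    rw [dist_comm, dist_eq_norm]
    exact arccos_inner_le_chord (hunit i) (hunit (i+1)) hε1 (hchord i)
  calc (1 - ε^2/4) * Real.arccos ⟪γ a, γ b⟫
      ≤ (1 - ε^2/4) * ∑ i ∈ Finset.range m, Real.arccos ⟪γ (u i), γ (u (i+1))⟫ :=
        mul_le_mul_of_nonneg_left chain hfac
    _ = ∑ i ∈ Finset.range m, (1 - ε^2/4) * Real.arccos ⟪γ (u i), γ (u (i+1))⟫ := by
        rw [Finset.mul_sum]
    _ ≤ ∑ i ∈ Finset.range m, dist (γ (u (i+1))) (γ (u i)) :=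
        Finset.sum_le_sum (fun i _ => step2 i)
    _ ≤ (eVariationOn γ (Set.Icc a b)).toReal := by
        have hsum := eVariationOn.sum_le (f := γ) (n := m) humono humem
        have : ∑ i ∈ Finset.range m, dist (γ (u (i+1))) (γ (u i)) =
            (∑ i ∈ Finset.range m, edist (γ (u (i+1))) (γ (u i))).toReal := by
          rw [ENNReal.toReal_sum (fun i _ => edist_ne_top _ _)]
          simp [dist_edist]
        rw [this]
        exact ENNReal.toReal_mono hfin hsum

variable {E : Type*} [PseudoMetricSpace E]

lemma evar_small_left (f : ℝ → E) {a b : ℝ} (hab : a < b)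
    (hcont : ContinuousWithinAt f (Icc a b) b)
    (hfin : eVariationOn f (Icc a b) ≠ ⊤) {ε : ℝ} (hε : 0 < ε) :
    ∃ t ∈ Ico a b, eVariationOn f (Icc t b) ≤ ENNReal.ofReal ε := by
  set K := eVariationOn f (Icc a b) with hK
  by_cases hKε : K ≤ ENNReal.ofReal ε
  · exact ⟨a, ⟨le_refl a, hab⟩, hKε⟩
  push_neg at hKε
  have hKpos : K ≠ 0 := by
    intro h; rw [h] at hKε; exact (not_lt_of_ge zero_le) hKε
  have hsub : K - ENNReal.ofReal (ε/2) < K :=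
    ENNReal.sub_lt_self hfin hKpos (by simp [ENNReal.ofReal_pos]; linarith)
  rw [hK, eVariationOn] at hsub
  obtain ⟨⟨n, ⟨u, hu, us⟩⟩, hsum⟩ := lt_iSup_iff.mp hsub
  simp only at hsum
  -- continuity at b
  set c := ε/(8*(n+1)) with hc
  have hc0 : 0 < c := by positivity
  rw [Metric.continuousWithinAt_iff] at hcont
  obtain ⟨δ, hδ0, hδ⟩ := hcont c hc0
  set t := max a (b - δ/2) with ht_def
  have htb : t < b := max_lt hab (by linarith)
  have hta : a ≤ t := le_max_left _ _
  have htmem : t ∈ Icc a b := ⟨hta, htb.le⟩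
  have htclose : dist t b < δ := by
    rw [Real.dist_eq, abs_sub_comm, abs_of_nonneg (by linarith : 0 ≤ b - t)]
    have : b - δ/2 ≤ t := le_max_right _ _
    linarith
  -- modified partition
  set v : ℕ → ℝ := fun i => min (u i) t with hv
  have hvmono : Monotone v := fun i j hij => min_le_min (hu hij) le_rfl
  have hvmem : ∀ i, v i ∈ Icc a t :=
    fun i => ⟨le_min (us i).1 hta, min_le_right _ _⟩
  have hcorr : ∀ j, edist (f (u j)) (f (v j)) ≤ ENNReal.ofReal (2*c) := by
    intro j
    by_cases h : u j ≤ t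
    · simp [hv, min_eq_left h]
    · push_neg at h
      have hvj : v j = t := by simp [hv, min_eq_right h.le]
      have h1 : dist (f (u j)) (f b) < c := by
        apply hδ (us j)
        rw [Real.dist_eq, abs_sub_comm, abs_of_nonneg (by linarith [(us j).2] : 0 ≤ b - u j)]
        have : b - δ/2 ≤ t := le_max_right _ _
        linarith [(us j).2]
      have h2 : dist (f t) (f b) < c := hδ htmem htclose
      rw [hvj, edist_dist]
      apply ENNReal.ofReal_le_ofReal
      calc dist (f (u j)) (f t) ≤ dist (f (u j)) (f b) + dist (f b) (f t) := dist_triangle _ _ _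
        _ ≤ 2*c := by rw [dist_comm (f b)]; linarith
  have hterm : ∀ i, edist (f (u (i+1))) (f (u i)) ≤
      edist (f (v (i+1))) (f (v i)) + ENNReal.ofReal (4*c) := by
    intro i
    calc edist (f (u (i+1))) (f (u i))
        ≤ edist (f (u (i+1))) (f (v (i+1))) + edist (f (v (i+1))) (f (v i))
            + edist (f (v i)) (f (u i)) := edist_triangle4 _ _ _ _
      _ ≤ ENNReal.ofReal (2*c) + edist (f (v (i+1))) (f (v i)) + ENNReal.ofReal (2*c) := by
          gcongr
          · exact hcorr (i+1)
          · rw [edist_comm]; exact hcorr i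
      _ = edist (f (v (i+1))) (f (v i)) + (ENNReal.ofReal (2*c) + ENNReal.ofReal (2*c)) := by
          ring
      _ = edist (f (v (i+1))) (f (v i)) + ENNReal.ofReal (4*c) := by
          rw [← ENNReal.ofReal_add (by linarith) (by linarith)]
          ring_nf
  have hS1 : (∑ i ∈ Finset.range n, edist (f (u (i+1))) (f (u i))) ≤
      (∑ i ∈ Finset.range n, edist (f (v (i+1))) (f (v i))) + ENNReal.ofReal (ε/2) := by
    calc (∑ i ∈ Finset.range n, edist (f (u (i+1))) (f (u i)))
        ≤ ∑ i ∈ Finset.range n, (edist (f (v (i+1))) (f (v i)) + ENNReal.ofReal (4*c)) :=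
          Finset.sum_le_sum (fun i _ => hterm i)
      _ = (∑ i ∈ Finset.range n, edist (f (v (i+1))) (f (v i))) + n * ENNReal.ofReal (4*c) := by
          rw [Finset.sum_add_distrib]; simp [mul_comm]
      _ ≤ (∑ i ∈ Finset.range n, edist (f (v (i+1))) (f (v i))) + ENNReal.ofReal (ε/2) := by
          gcongr
          calc (n : ENNReal) * ENNReal.ofReal (4*c)
              = ENNReal.ofReal (n : ℝ) * ENNReal.ofReal (4*c) := by
                rw [ENNReal.ofReal_natCast]
            _ = ENNReal.ofReal ((n : ℝ) * (4*c)) := by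
                rw [← ENNReal.ofReal_mul (Nat.cast_nonneg n)]
            _ ≤ ENNReal.ofReal (ε/2) := by
                apply ENNReal.ofReal_le_ofReal
                rw [hc]
                have h8 : (0:ℝ) < 8*((n:ℝ)+1) := by positivity
                rw [mul_comm, mul_div_assoc', div_mul_eq_mul_div, div_le_div_iff₀ h8 (by norm_num : (0:ℝ) < 2)]
                nlinarith [mul_nonneg (Nat.cast_nonneg (α := ℝ) n) hε.le]
  have hS2 : (∑ i ∈ Finset.range n, edist (f (v (i+1))) (f (v i))) ≤ eVariationOn f (Icc a t) :=
    eVariationOn.sum_le (f := f) (n := n) hvmono hvmem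
  have hKle : K ≤ eVariationOn f (Icc a t) + ENNReal.ofReal ε := by
    have h1 : K ≤ (∑ i ∈ Finset.range n, edist (f (u (i+1))) (f (u i))) + ENNReal.ofReal (ε/2) :=
      tsub_le_iff_right.mp hsum.le
    calc K ≤ (∑ i ∈ Finset.range n, edist (f (u (i+1))) (f (u i))) + ENNReal.ofReal (ε/2) := h1
      _ ≤ ((∑ i ∈ Finset.range n, edist (f (v (i+1))) (f (v i))) + ENNReal.ofReal (ε/2))
          + ENNReal.ofReal (ε/2) := by gcongr
      _ ≤ (eVariationOn f (Icc a t) + ENNReal.ofReal (ε/2)) + ENNReal.ofReal (ε/2) := by gcongr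
      _ = eVariationOn f (Icc a t) + ENNReal.ofReal ε := by
          rw [add_assoc, ← ENNReal.ofReal_add (by linarith) (by linarith)]
          norm_num
  -- split the variation
  have hsplit : eVariationOn f (Icc a t) + eVariationOn f (Icc t b) = K := by
    have h0 := eVariationOn.Icc_add_Icc f (s := Icc a b) hta htb.le htmem
    rw [Set.Icc_inter_Icc, Set.Icc_inter_Icc, Set.Icc_inter_Icc, sup_idem, inf_idem,
      inf_eq_right.mpr htb.le, sup_eq_right.mpr hta] at h0
    exact h0
  have hvat_fin : eVariationOn f (Icc a t) ≠ ⊤ :=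
    ne_top_of_le_ne_top hfin (eVariationOn.mono f (Icc_subset_Icc_right htb.le))
  refine ⟨t, ⟨hta, htb⟩, ?_⟩
  have : eVariationOn f (Icc a t) + eVariationOn f (Icc t b) ≤
      eVariationOn f (Icc a t) + ENNReal.ofReal ε := by rw [hsplit]; exact hKle
  exact ENNReal.le_of_add_le_add_left hvat_fin this

lemma evar_small_right (f : ℝ → E) {a b : ℝ} (hab : a < b)
    (hcont : ContinuousWithinAt f (Icc a b) a)
    (hfin : eVariationOn f (Icc a b) ≠ ⊤) {ε : ℝ} (hε : 0 < ε) :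
    ∃ t ∈ Ioc a b, eVariationOn f (Icc a t) ≤ ENNReal.ofReal ε := by
  set K := eVariationOn f (Icc a b) with hK
  by_cases hKε : K ≤ ENNReal.ofReal ε
  · exact ⟨b, ⟨hab, le_refl b⟩, hKε⟩
  push_neg at hKε
  have hKpos : K ≠ 0 := by
    intro h; rw [h] at hKε; exact (not_lt_of_ge zero_le) hKε
  have hsub : K - ENNReal.ofReal (ε/2) < K :=
    ENNReal.sub_lt_self hfin hKpos (by simp [ENNReal.ofReal_pos]; linarith)
  rw [hK, eVariationOn] at hsub
  obtain ⟨⟨n, ⟨u, hu, us⟩⟩, hsum⟩ := lt_iSup_iff.mp hsub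
  simp only at hsum
  set c := ε/(8*(n+1)) with hc
  have hc0 : 0 < c := by positivity
  rw [Metric.continuousWithinAt_iff] at hcont
  obtain ⟨δ, hδ0, hδ⟩ := hcont c hc0
  set t := min b (a + δ/2) with ht_def
  have hta : a < t := lt_min hab (by linarith)
  have htb : t ≤ b := min_le_left _ _
  have htmem : t ∈ Icc a b := ⟨hta.le, htb⟩
  have htclose : dist t a < δ := by
    rw [Real.dist_eq, abs_of_nonneg (by linarith : 0 ≤ t - a)]
    have : t ≤ a + δ/2 := min_le_right _ _
    linarith
  set v : ℕ → ℝ := fun i => max (u i) t with hv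
  have hvmono : Monotone v := fun i j hij => max_le_max (hu hij) le_rfl
  have hvmem : ∀ i, v i ∈ Icc t b :=
    fun i => ⟨le_max_right _ _, max_le (us i).2 htb⟩
  have hcorr : ∀ j, edist (f (u j)) (f (v j)) ≤ ENNReal.ofReal (2*c) := by
    intro j
    by_cases h : t ≤ u j
    · simp [hv, max_eq_left h]
    · push_neg at h
      have hvj : v j = t := by simp [hv, max_eq_right h.le]
      have h1 : dist (f (u j)) (f a) < c := by
        apply hδ (us j)
        rw [Real.dist_eq, abs_of_nonneg (by linarith [(us j).1] : 0 ≤ u j - a)]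
        have : t ≤ a + δ/2 := min_le_right _ _
        linarith [(us j).1]
      have h2 : dist (f t) (f a) < c := hδ htmem htclose
      rw [hvj, edist_dist]
      apply ENNReal.ofReal_le_ofReal
      calc dist (f (u j)) (f t) ≤ dist (f (u j)) (f a) + dist (f a) (f t) := dist_triangle _ _ _
        _ ≤ 2*c := by rw [dist_comm (f a)]; linarith
  have hterm : ∀ i, edist (f (u (i+1))) (f (u i)) ≤
      edist (f (v (i+1))) (f (v i)) + ENNReal.ofReal (4*c) := by
    intro i
    calc edist (f (u (i+1))) (f (u i))
        ≤ edist (f (u (i+1))) (f (v (i+1))) + edist (f (v (i+1))) (f (v i))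
            + edist (f (v i)) (f (u i)) := edist_triangle4 _ _ _ _
      _ ≤ ENNReal.ofReal (2*c) + edist (f (v (i+1))) (f (v i)) + ENNReal.ofReal (2*c) := by
          gcongr
          · exact hcorr (i+1)
          · rw [edist_comm]; exact hcorr i
      _ = edist (f (v (i+1))) (f (v i)) + (ENNReal.ofReal (2*c) + ENNReal.ofReal (2*c)) := by
          ring
      _ = edist (f (v (i+1))) (f (v i)) + ENNReal.ofReal (4*c) := by
          rw [← ENNReal.ofReal_add (by linarith) (by linarith)]
          ring_nf
  have hS1 : (∑ i ∈ Finset.range n, edist (f (u (i+1))) (f (u i))) ≤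
      (∑ i ∈ Finset.range n, edist (f (v (i+1))) (f (v i))) + ENNReal.ofReal (ε/2) := by
    calc (∑ i ∈ Finset.range n, edist (f (u (i+1))) (f (u i)))
        ≤ ∑ i ∈ Finset.range n, (edist (f (v (i+1))) (f (v i)) + ENNReal.ofReal (4*c)) :=
          Finset.sum_le_sum (fun i _ => hterm i)
      _ = (∑ i ∈ Finset.range n, edist (f (v (i+1))) (f (v i))) + n * ENNReal.ofReal (4*c) := by
          rw [Finset.sum_add_distrib]; simp [mul_comm]
      _ ≤ (∑ i ∈ Finset.range n, edist (f (v (i+1))) (f (v i))) + ENNReal.ofReal (ε/2) := by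
          gcongr
          calc (n : ENNReal) * ENNReal.ofReal (4*c)
              = ENNReal.ofReal (n : ℝ) * ENNReal.ofReal (4*c) := by
                rw [ENNReal.ofReal_natCast]
            _ = ENNReal.ofReal ((n : ℝ) * (4*c)) := by
                rw [← ENNReal.ofReal_mul (Nat.cast_nonneg n)]
            _ ≤ ENNReal.ofReal (ε/2) := by
                apply ENNReal.ofReal_le_ofReal
                rw [hc]
                have h8 : (0:ℝ) < 8*((n:ℝ)+1) := by positivity
                rw [mul_comm, mul_div_assoc', div_mul_eq_mul_div,
                  div_le_div_iff₀ h8 (by norm_num : (0:ℝ) < 2)]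
                nlinarith [mul_nonneg (Nat.cast_nonneg (α := ℝ) n) hε.le]
  have hS2 : (∑ i ∈ Finset.range n, edist (f (v (i+1))) (f (v i))) ≤ eVariationOn f (Icc t b) :=
    eVariationOn.sum_le (f := f) (n := n) hvmono hvmem
  have hKle : K ≤ eVariationOn f (Icc t b) + ENNReal.ofReal ε := by
    have h1 : K ≤ (∑ i ∈ Finset.range n, edist (f (u (i+1))) (f (u i))) + ENNReal.ofReal (ε/2) :=
      tsub_le_iff_right.mp hsum.le
    calc K ≤ (∑ i ∈ Finset.range n, edist (f (u (i+1))) (f (u i))) + ENNReal.ofReal (ε/2) := h1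
      _ ≤ ((∑ i ∈ Finset.range n, edist (f (v (i+1))) (f (v i))) + ENNReal.ofReal (ε/2))
          + ENNReal.ofReal (ε/2) := by gcongr
      _ ≤ (eVariationOn f (Icc t b) + ENNReal.ofReal (ε/2)) + ENNReal.ofReal (ε/2) := by gcongr
      _ = eVariationOn f (Icc t b) + ENNReal.ofReal ε := by
          rw [add_assoc, ← ENNReal.ofReal_add (by linarith) (by linarith)]
          norm_num
  have hsplit : eVariationOn f (Icc a t) + eVariationOn f (Icc t b) = K := by
    have h0 := eVariationOn.Icc_add_Icc f (s := Icc a b) hta.le htb htmem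
    rw [Set.Icc_inter_Icc, Set.Icc_inter_Icc, Set.Icc_inter_Icc, sup_idem, inf_idem,
      inf_eq_right.mpr htb, sup_eq_right.mpr hta.le] at h0
    exact h0
  have hvtb_fin : eVariationOn f (Icc t b) ≠ ⊤ :=
    ne_top_of_le_ne_top hfin (eVariationOn.mono f (Icc_subset_Icc_left hta.le))
  refine ⟨t, ⟨hta, htb⟩, ?_⟩
  have hfinal : eVariationOn f (Icc t b) + eVariationOn f (Icc a t) ≤
      eVariationOn f (Icc t b) + ENNReal.ofReal ε := by
    rw [add_comm (eVariationOn f (Icc t b))]; rw [hsplit]; exact hKle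
  exact ENNReal.le_of_add_le_add_left hvtb_fin hfinal

lemma evar_split {E : Type*} [PseudoMetricSpace E] (f : ℝ → E) {a x y : ℝ}
    (hx : a ≤ x) (hxy : x ≤ y) (hfin : eVariationOn f (Icc a y) ≠ ⊤) :
    (eVariationOn f (Icc a y)).toReal
      = (eVariationOn f (Icc a x)).toReal + (eVariationOn f (Icc x y)).toReal := by
  have h0 := eVariationOn.Icc_add_Icc f (s := Icc a y) hx hxy ⟨hx, hxy⟩
  rw [Set.Icc_inter_Icc, Set.Icc_inter_Icc, Set.Icc_inter_Icc, sup_idem, inf_idem,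
    inf_eq_right.mpr hxy, sup_eq_right.mpr hx] at h0
  have hf1 : eVariationOn f (Icc a x) ≠ ⊤ :=
    ne_top_of_le_ne_top hfin (eVariationOn.mono f (Icc_subset_Icc_right hxy))
  have hf2 : eVariationOn f (Icc x y) ≠ ⊤ :=
    ne_top_of_le_ne_top hfin (eVariationOn.mono f (Icc_subset_Icc_left hx))
  rw [← h0, ENNReal.toReal_add hf1 hf2]

lemma evar_cont {E : Type*} [PseudoMetricSpace E] (f : ℝ → E) (hcont : ContinuousOn f (Icc 0 1))
    (hfin : eVariationOn f (Icc 0 1) ≠ ⊤) :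
    ContinuousOn (fun x => (eVariationOn f (Icc 0 x)).toReal) (Icc 0 1) := by
  intro x hx
  rw [Metric.continuousWithinAt_iff]
  intro ε hε
  have hε2 : 0 < ε/2 := by linarith
  obtain ⟨δR, hδR0, hδR⟩ : ∃ δR > 0, ∀ y ∈ Icc (0:ℝ) 1, x ≤ y → y - x < δR →
      (eVariationOn f (Icc x y)).toReal ≤ ε/2 := by
    rcases eq_or_lt_of_le hx.2 with h1 | h1
    · exact ⟨1, one_pos, fun y hy hxy hyd => by
        have : y = x := le_antisymm (h1 ▸ hy.2) hxy
        have h2 : (eVariationOn f (Icc x y)).toReal = 0 := by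
          simp [this, eVariationOn.subsingleton f (Set.subsingleton_Icc_of_ge (le_refl x))]
        linarith⟩
    · have hsub : Icc x 1 ⊆ Icc 0 1 := Icc_subset_Icc hx.1 le_rfl
      have hfin' : eVariationOn f (Icc x 1) ≠ ⊤ :=
        ne_top_of_le_ne_top hfin (eVariationOn.mono f hsub)
      obtain ⟨t₂, ht₂, hvt₂⟩ := evar_small_right f h1 ((hcont x hx).mono hsub) hfin' hε2
      refine ⟨t₂ - x, by linarith [ht₂.1], fun y hy hxy hyd => ?_⟩
      have hsub2 : Icc x y ⊆ Icc x t₂ := Icc_subset_Icc le_rfl (by linarith)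
      calc (eVariationOn f (Icc x y)).toReal
          ≤ (eVariationOn f (Icc x t₂)).toReal :=
            ENNReal.toReal_mono (ne_top_of_le_ne_top hfin
              (eVariationOn.mono f (Icc_subset_Icc hx.1 ht₂.2)))
              (eVariationOn.mono f hsub2)
        _ ≤ (ENNReal.ofReal (ε/2)).toReal := ENNReal.toReal_mono ENNReal.ofReal_ne_top hvt₂
        _ = ε/2 := ENNReal.toReal_ofReal hε2.le
  obtain ⟨δL, hδL0, hδL⟩ : ∃ δL > 0, ∀ y ∈ Icc (0:ℝ) 1, y ≤ x → x - y < δL →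
      (eVariationOn f (Icc y x)).toReal ≤ ε/2 := by
    rcases eq_or_lt_of_le hx.1 with h1 | h1
    · exact ⟨1, one_pos, fun y hy hxy hyd => by
        have : y = x := le_antisymm hxy (h1 ▸ hy.1)
        have h2 : (eVariationOn f (Icc y x)).toReal = 0 := by
          simp [this, eVariationOn.subsingleton f (Set.subsingleton_Icc_of_ge (le_refl x))]
        linarith⟩
    · have hsub : Icc 0 x ⊆ Icc 0 1 := Icc_subset_Icc le_rfl hx.2
      have hfin' : eVariationOn f (Icc 0 x) ≠ ⊤ :=
        ne_top_of_le_ne_top hfin (eVariationOn.mono f hsub)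
      obtain ⟨t₁, ht₁, hvt₁⟩ := evar_small_left f h1 ((hcont x hx).mono hsub) hfin' hε2
      refine ⟨x - t₁, by linarith [ht₁.2], fun y hy hxy hyd => ?_⟩
      have hsub2 : Icc y x ⊆ Icc t₁ x := Icc_subset_Icc (by linarith) le_rfl
      calc (eVariationOn f (Icc y x)).toReal
          ≤ (eVariationOn f (Icc t₁ x)).toReal :=
            ENNReal.toReal_mono (ne_top_of_le_ne_top hfin
              (eVariationOn.mono f (Icc_subset_Icc ht₁.1 hx.2)))
              (eVariationOn.mono f hsub2)
        _ ≤ (ENNReal.ofReal (ε/2)).toReal := ENNReal.toReal_mono ENNReal.ofReal_ne_top hvt₁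
        _ = ε/2 := ENNReal.toReal_ofReal hε2.le
  refine ⟨min δR δL, lt_min hδR0 hδL0, fun y hy hyd => ?_⟩
  rw [Real.dist_eq] at hyd
  rcases le_total x y with hxy | hxy
  · have hfin' : eVariationOn f (Icc 0 y) ≠ ⊤ :=
      ne_top_of_le_ne_top hfin (eVariationOn.mono f (Icc_subset_Icc le_rfl hy.2))
    have h := evar_split f hx.1 hxy hfin'
    have hd : y - x < δR :=
      lt_of_le_of_lt (le_abs_self _) (lt_of_lt_of_le hyd (min_le_left _ _))
    have hvar := hδR y hy hxy hd
    have hnn : 0 ≤ (eVariationOn f (Icc x y)).toReal := ENNReal.toReal_nonneg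
    rw [Real.dist_eq, h, add_sub_cancel_left, abs_of_nonneg hnn]
    linarith
  · have hfin' : eVariationOn f (Icc 0 x) ≠ ⊤ :=
      ne_top_of_le_ne_top hfin (eVariationOn.mono f (Icc_subset_Icc le_rfl hx.2))
    have h := evar_split f hy.1 hxy hfin'
    have hd : x - y < δL := by
      rw [abs_sub_comm] at hyd
      exact lt_of_le_of_lt (le_abs_self _) (lt_of_lt_of_le hyd (min_le_right _ _))
    have hvar := hδL y hy hxy hd
    have hnn : 0 ≤ (eVariationOn f (Icc y x)).toReal := ENNReal.toReal_nonneg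
    rw [Real.dist_eq, h, sub_add_cancel_left, abs_neg, abs_of_nonneg hnn]
    linarith

lemma exists_bisection {E : Type*} [PseudoMetricSpace E] (f : ℝ → E)
    (hcont : ContinuousOn f (Icc 0 1))
    (hfin : eVariationOn f (Icc 0 1) ≠ ⊤) :
    ∃ t ∈ Icc (0:ℝ) 1,
      (eVariationOn f (Icc 0 t)).toReal = (eVariationOn f (Icc 0 1)).toReal / 2 ∧
      (eVariationOn f (Icc t 1)).toReal = (eVariationOn f (Icc 0 1)).toReal / 2 := by
  set w : ℝ → ℝ := fun x => (eVariationOn f (Icc 0 x)).toReal with hw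
  set L : ℝ := (eVariationOn f (Icc 0 1)).toReal with hL
  have hw0 : w 0 = 0 := by
    simp [hw, eVariationOn.subsingleton f (Set.subsingleton_Icc_of_ge (le_refl (0:ℝ)))]
  have hw1 : w 1 = L := rfl
  have hcw : ContinuousOn w (Icc 0 1) := evar_cont f hcont hfin
  have hL0 : 0 ≤ L := ENNReal.toReal_nonneg
  have hmem : L/2 ∈ Icc (w 0) (w 1) := by
    rw [hw0, hw1]; constructor <;> linarith
  obtain ⟨t, ht, hwt⟩ := intermediate_value_Icc (by norm_num : (0:ℝ) ≤ 1) hcw hmem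
  refine ⟨t, ht, hwt, ?_⟩
  have hsplit : L = w t + (eVariationOn f (Icc t 1)).toReal :=
    evar_split f ht.1 ht.2 hfin
  rw [hwt] at hsplit
  linarith

/-- A closed curve on the unit sphere `S² ⊆ ℝ³` of length strictly less than `2π`
lies in an open hemisphere. -/
theorem short_closed_spherical_curve_in_open_hemisphere
    (γ : ℝ → EuclideanSpace ℝ (Fin 3))
    (hcont : ContinuousOn γ (Set.Icc 0 1)) (hclosed : γ 0 = γ 1)
    (hsphere : ∀ t ∈ Set.Icc (0 : ℝ) 1, ‖γ t‖ = 1)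
    (hlen : eVariationOn γ (Set.Icc 0 1) < ENNReal.ofReal (2 * π)) :
    ∃ v : EuclideanSpace ℝ (Fin 3), ‖v‖ = 1 ∧ ∀ t ∈ Set.Icc (0 : ℝ) 1, 0 < ⟪γ t, v⟫ := by
  have hfin : eVariationOn γ (Set.Icc 0 1) ≠ ⊤ := ne_top_of_lt hlen
  set L : ℝ := (eVariationOn γ (Set.Icc 0 1)).toReal with hLdef
  have hL2π : L < 2 * π := by
    have := ENNReal.toReal_mono (ENNReal.ofReal_ne_top) hlen.le
    rw [ENNReal.toReal_ofReal (by positivity)] at this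
    rcases eq_or_lt_of_le this with h | h
    · exfalso
      have : eVariationOn γ (Set.Icc 0 1) = ENNReal.ofReal (2*π) := by
        rw [← ENNReal.ofReal_toReal hfin, h]
      rw [this] at hlen
      exact lt_irrefl _ hlen
    · exact h
  obtain ⟨T, hT, hhalf1, hhalf2⟩ := exists_bisection γ hcont hfin
  have hLhalf : L / 2 < π := by linarith
  -- choose ε
  set d : ℝ := π - L/2 with hd_def
  have hd : 0 < d := by simp only [hd_def]; linarith
  set ε : ℝ := min 1 (Real.sqrt (d/π)) with hε_def
  have hε0 : 0 < ε := lt_min one_pos (Real.sqrt_pos.mpr (div_pos hd Real.pi_pos))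
  have hε1 : ε ≤ 1 := min_le_left _ _
  have hεsq : ε^2 ≤ d/π := by
    have h1 : ε ≤ Real.sqrt (d/π) := min_le_right _ _
    have h2 : ε^2 ≤ Real.sqrt (d/π)^2 := pow_le_pow_left₀ hε0.le h1 2
    rwa [Real.sq_sqrt (div_nonneg hd.le Real.pi_pos.le)] at h2
  have hkey : L/2 < (1 - ε^2/4) * π := by
    have h1 : ε^2 * π ≤ (d/π) * π := mul_le_mul_of_nonneg_right hεsq Real.pi_pos.le
    rw [div_mul_cancel₀ d (ne_of_gt Real.pi_pos)] at h1
    simp only [hd_def] at h1 ⊢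
    nlinarith
  -- the main positivity claim
  have hpos : ∀ s ∈ Set.Icc (0:ℝ) 1, 0 < ⟪γ s, γ 0 + γ T⟫ := by
    intro s hs
    by_contra hcon
    push_neg at hcon
    rw [inner_add_right] at hcon
    have h0mem : (0:ℝ) ∈ Set.Icc (0:ℝ) 1 := by constructor <;> norm_num
    have h1mem : (1:ℝ) ∈ Set.Icc (0:ℝ) 1 := by constructor <;> norm_num
    have hq1 : |⟪γ s, γ T⟫| ≤ 1 := by
      simpa [hsphere s hs, hsphere T hT] using abs_real_inner_le_norm (γ s) (γ T)
    have hp1 : |⟪γ s, γ 0⟫| ≤ 1 := by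
      simpa [hsphere s hs, hsphere 0 h0mem] using abs_real_inner_le_norm (γ s) (γ 0)
    rw [abs_le] at hq1 hp1
    -- π ≤ arccos ⟪γ 0, γ s⟫ + arccos ⟪γ s, γ T⟫
    have harc : π ≤ Real.arccos ⟪γ 0, γ s⟫ + Real.arccos ⟪γ s, γ T⟫ := by
      have hcomm : ⟪γ 0, γ s⟫ = ⟪γ s, γ 0⟫ := real_inner_comm _ _
      have hle : ⟪γ 0, γ s⟫ ≤ -⟪γ s, γ T⟫ := by rw [hcomm]; linarith
      have := arccos_antitone hle
      rw [Real.arccos_neg] at this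
      linarith
    have hfac : (0:ℝ) ≤ 1 - ε^2/4 := by nlinarith
    rcases le_total s T with hsT | hTs
    · -- s in the first half
      have hfin1 : eVariationOn γ (Set.Icc 0 s) ≠ ⊤ :=
        ne_top_of_le_ne_top hfin (eVariationOn.mono γ (Icc_subset_Icc le_rfl hs.2))
      have hfin2 : eVariationOn γ (Set.Icc s T) ≠ ⊤ :=
        ne_top_of_le_ne_top hfin (eVariationOn.mono γ (Icc_subset_Icc hs.1 hT.2))
      have hfinT : eVariationOn γ (Set.Icc 0 T) ≠ ⊤ :=
        ne_top_of_le_ne_top hfin (eVariationOn.mono γ (Icc_subset_Icc le_rfl hT.2))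
      have A1 := arccos_le_variation γ hcont hsphere hs.1 (Icc_subset_Icc le_rfl hs.2)
        hε0 hε1 hfin1
      have A2 := arccos_le_variation γ hcont hsphere hsT (Icc_subset_Icc hs.1 hT.2)
        hε0 hε1 hfin2
      have hsum := evar_split γ hs.1 hsT hfinT
      rw [hhalf1] at hsum
      have hππ : (1 - ε^2/4) * π ≤ (1 - ε^2/4) *
          (Real.arccos ⟪γ 0, γ s⟫ + Real.arccos ⟪γ s, γ T⟫) :=
        mul_le_mul_of_nonneg_left harc hfac
      nlinarith
    · -- s in the second half
      have hfin1 : eVariationOn γ (Set.Icc T s) ≠ ⊤ :=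
        ne_top_of_le_ne_top hfin (eVariationOn.mono γ (Icc_subset_Icc hT.1 hs.2))
      have hfin2 : eVariationOn γ (Set.Icc s 1) ≠ ⊤ :=
        ne_top_of_le_ne_top hfin (eVariationOn.mono γ (Icc_subset_Icc hs.1 le_rfl))
      have hfinT : eVariationOn γ (Set.Icc T 1) ≠ ⊤ :=
        ne_top_of_le_ne_top hfin (eVariationOn.mono γ (Icc_subset_Icc hT.1 le_rfl))
      have A1 := arccos_le_variation γ hcont hsphere hTs (Icc_subset_Icc hT.1 hs.2)
        hε0 hε1 hfin1
      have A2 := arccos_le_variation γ hcont hsphere hs.2 (Icc_subset_Icc hs.1 le_rfl)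
        hε0 hε1 hfin2
      have hsum := evar_split γ hTs hs.2 hfinT
      rw [hhalf2] at hsum
      have hTs' : Real.arccos ⟪γ T, γ s⟫ = Real.arccos ⟪γ s, γ T⟫ := by
        rw [real_inner_comm]
      have hs1' : Real.arccos ⟪γ s, γ 1⟫ = Real.arccos ⟪γ 0, γ s⟫ := by
        rw [← hclosed, real_inner_comm]
      rw [hTs'] at A1
      rw [hs1'] at A2
      have hππ : (1 - ε^2/4) * π ≤ (1 - ε^2/4) *
          (Real.arccos ⟪γ 0, γ s⟫ + Real.arccos ⟪γ s, γ T⟫) :=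
        mul_le_mul_of_nonneg_left harc hfac
      nlinarith
  -- construct the witness
  have h0mem : (0:ℝ) ∈ Set.Icc (0:ℝ) 1 := by constructor <;> norm_num
  have hne : γ 0 + γ T ≠ 0 := by
    intro h
    have := hpos 0 h0mem
    rw [h, inner_zero_right] at this
    exact lt_irrefl _ this
  have hnorm : 0 < ‖γ 0 + γ T‖ := norm_pos_iff.mpr hne
  refine ⟨‖γ 0 + γ T‖⁻¹ • (γ 0 + γ T), ?_, ?_⟩
  · rw [norm_smul, norm_inv, norm_norm, inv_mul_cancel₀ (ne_of_gt hnorm)]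
  · intro t ht
    rw [real_inner_smul_right]
    exact mul_pos (inv_pos.mpr hnorm) (hpos t ht)
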